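/- arXiv:2208.13554 — 5 statements merged into one kernel-verified Lean document; each statement's English description precedes it below -/
import Mathlib

section
/- Let f : X → Z be a continuous map of metric spaces with X compact and f locally injective. Then each point z in f(X) has an open neighborhood U such that the restriction of f to each connected component of f⁻¹(U) is injective. -/
theorem stmt_1 {X Z : Type*} [MetricSpace X] [MetricSpace Z] [CompactSpace X]
    (f : X → Z) (hf : Continuous f)
    (hloc : ∀ x : X, ∃ U ∈ nhds x, Set.InjOn f U) :
    ∀ z ∈ Set.range f, ∃ U : Set Z, IsOpen U ∧ z ∈ U ∧
      ∀ x ∈ f ⁻¹' U, Set.InjOn f (connectedComponentIn (f ⁻¹' U) x) := by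
  classical
  rintro z ⟨x₀, rfl⟩
  choose U hU hUinj using hloc
  set F : Set X := f ⁻¹' {f x₀} with hFdef
  have hFclosed : IsClosed F := isClosed_singleton.preimage hf
  have hFc : IsCompact F := hFclosed.isCompact
  obtain ⟨t, htF, hFt⟩ := hFc.elim_nhds_subcover U (fun x _ => hU x)
  have htsub : F ⊆ ↑t := by
    intro y hy
    obtain ⟨x, hx, hyx⟩ := Set.mem_iUnion₂.1 (hFt hy)
    have hxF : x ∈ F := htF x hx
    have hxy : y = x := by
      apply hUinj x hyx (mem_of_mem_nhds (hU x))
      have h1 : f y = f x₀ := hy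
      have h2 : f x = f x₀ := hxF
      rw [h1, h2]
    simpa [hxy] using hx
  have hFfin : F.Finite := Set.Finite.subset t.finite_toSet htsub
  -- pairwise disjoint radii
  set ε : X → ℝ := fun x =>
    if h : (F \ {x}).Nonempty then Metric.infDist x (F \ {x}) / 2 else 1 with hεdef
  have hεpos : ∀ x ∈ F, 0 < ε x := by
    intro x hx
    by_cases h : (F \ {x}).Nonempty
    · have hcl : IsClosed (F \ {x}) := (hFfin.subset Set.diff_subset).isClosed
      have : 0 < Metric.infDist x (F \ {x}) :=
        (hcl.notMem_iff_infDist_pos h).1 (by simp)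
      simp only [hεdef, dif_pos h]
      linarith
    · simp only [hεdef]; rw [dif_neg h]; exact one_pos
  have hεle : ∀ x ∈ F, ∀ y ∈ F, x ≠ y → ε x ≤ dist x y / 2 := by
    intro x hx y hy hxy
    have h : (F \ {x}).Nonempty := ⟨y, hy, by simp [Ne.symm hxy]⟩
    have : Metric.infDist x (F \ {x}) ≤ dist x y :=
      Metric.infDist_le_dist_of_mem ⟨hy, by simp [Ne.symm hxy]⟩
    simp only [hεdef, dif_pos h]
    linarith
  set W : X → Set X := fun x => interior (U x) ∩ Metric.ball x (ε x) with hWdef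
  have hWopen : ∀ x, IsOpen (W x) := fun x => isOpen_interior.inter Metric.isOpen_ball
  have hWmem : ∀ x ∈ F, x ∈ W x := fun x hx =>
    ⟨mem_interior_iff_mem_nhds.2 (hU x), Metric.mem_ball_self (hεpos x hx)⟩
  have hWinj : ∀ x, Set.InjOn f (W x) :=
    fun x => (hUinj x).mono (Set.inter_subset_left.trans interior_subset)
  have hWdisj : ∀ x ∈ F, ∀ y ∈ F, x ≠ y → Disjoint (W x) (W y) := by
    intro x hx y hy hxy
    rw [Set.disjoint_left]
    rintro w ⟨-, hwx⟩ ⟨-, hwy⟩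
    have h1 : dist w x < ε x := hwx
    have h2 : dist w y < ε y := hwy
    have e1 := hεle x hx y hy hxy
    have e2 := hεle y hy x hx (Ne.symm hxy)
    have : dist x y ≤ dist x w + dist w y := dist_triangle x w y
    rw [dist_comm x w] at this
    rw [dist_comm y x] at e2
    linarith
  set T : Set X := ⋃ x ∈ F, W x with hTdef
  have hTopen : IsOpen T := isOpen_biUnion fun x _ => hWopen x
  have hFT : F ⊆ T := fun x hx => Set.mem_biUnion hx (hWmem x hx)
  set K : Set X := Tᶜ with hKdef
  have hKc : IsCompact K := hTopen.isClosed_compl.isCompact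
  set V : Set Z := (f '' K)ᶜ with hVdef
  have hVopen : IsOpen V := (hKc.image hf).isClosed.isOpen_compl
  have hzV : f x₀ ∈ V := by
    rintro ⟨k, hk, hfk⟩
    exact hk (hFT (show k ∈ F from hfk))
  have hpre : f ⁻¹' V ⊆ T := by
    intro x hx
    by_contra h
    exact hx ⟨x, h, rfl⟩
  refine ⟨V, hVopen, hzV, ?_⟩
  intro x hx
  have hxC : x ∈ connectedComponentIn (f ⁻¹' V) x := mem_connectedComponentIn hx
  have hCsub : connectedComponentIn (f ⁻¹' V) x ⊆ T :=
    (connectedComponentIn_subset _ _).trans hpre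
  obtain ⟨a, ha, hxa⟩ := Set.mem_iUnion₂.1 (hCsub hxC)
  have hCa : connectedComponentIn (f ⁻¹' V) x ⊆ W a := by
    apply (isPreconnected_connectedComponentIn).subset_left_of_subset_union
      (hWopen a) (isOpen_biUnion fun b _ => hWopen b)
      (u := W a) (v := ⋃ b ∈ F \ {a}, W b)
    · rw [Set.disjoint_right]
      rintro w hw hwa
      obtain ⟨b, hb, hwb⟩ := Set.mem_iUnion₂.1 hw
      exact (Set.disjoint_left.1 (hWdisj a ha b hb.1 (fun h => hb.2 h.symm))) hwa hwb
    · intro w hw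
      obtain ⟨b, hb, hwb⟩ := Set.mem_iUnion₂.1 (hCsub hw)
      by_cases hab : b = a
      · exact Or.inl (hab ▸ hwb)
      · exact Or.inr (Set.mem_biUnion ⟨hb, hab⟩ hwb)
    · exact ⟨x, hxC, hxa⟩
  exact (hWinj a).mono hCa
end

section
/- Let X be a topological space, k a positive integer, and (A₁, …, A_k) a k-tuple of closed subsets of X, at least one of which is nonempty. Call a point P in A := A₁ ∪ ⋯ ∪ A_k 'properly covered' if there is a neighborhood U of P such that all nonempty sets among U ∩ A₁, …, U ∩ A_k coincide. Then the set of properly covered points is nonempty, open in A, and dense in A. -/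
open Set

theorem stmt_3 {X : Type*} [TopologicalSpace X] (k : ℕ) (hk : 0 < k)
    (A : Fin k → Set X) (hclosed : ∀ i, IsClosed (A i))
    (hne : ∃ i, (A i).Nonempty) :
    (⋃ i, A i ∩ {P | ∃ U ∈ nhds P, ∀ i j : Fin k,
        (U ∩ A i).Nonempty → (U ∩ A j).Nonempty → U ∩ A i = U ∩ A j}).Nonempty ∧
    (∃ W : Set X, IsOpen W ∧
      {P ∈ ⋃ i, A i | ∃ U ∈ nhds P, ∀ i j : Fin k,
        (U ∩ A i).Nonempty → (U ∩ A j).Nonempty → U ∩ A i = U ∩ A j} = W ∩ ⋃ i, A i) ∧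
    (⋃ i, A i) ⊆ closure {P ∈ ⋃ i, A i | ∃ U ∈ nhds P, ∀ i j : Fin k,
        (U ∩ A i).Nonempty → (U ∩ A j).Nonempty → U ∩ A i = U ∩ A j} := by
  classical
  set f : X → ℕ := fun x => (Finset.univ.filter (fun i => x ∈ A i)).card with hfdef
  -- key lemma: any open set meeting ⋃ A contains a properly covered point
  have key : ∀ V : Set X, IsOpen V → (V ∩ ⋃ i, A i).Nonempty →
      ∃ Q ∈ V ∩ ⋃ i, A i, ∃ U ∈ nhds Q, ∀ i j : Fin k,
        (U ∩ A i).Nonempty → (U ∩ A j).Nonempty → U ∩ A i = U ∩ A j := by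
    intro V hV hVne
    have hp : ∃ n, ∃ x, x ∈ V ∩ ⋃ i, A i ∧ f x = n := by
      obtain ⟨x, hx⟩ := hVne
      exact ⟨f x, x, hx, rfl⟩
    obtain ⟨Q, hQ, hQf⟩ := Nat.find_spec hp
    have hmin : ∀ x, x ∈ V ∩ ⋃ i, A i → f Q ≤ f x := by
      intro x hx
      rw [hQf]
      exact Nat.find_min' hp ⟨x, hx, rfl⟩
    set U : Set X := V ∩ ⋂ i ∈ {i : Fin k | Q ∉ A i}, (A i)ᶜ with hUdef
    have hUopen : IsOpen U :=
      hV.inter ((Set.toFinite _).isOpen_biInter (fun i _ => (hclosed i).isOpen_compl))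
    have hQU : Q ∈ U := by
      refine ⟨hQ.1, ?_⟩
      simp only [Set.mem_iInter, Set.mem_compl_iff]
      exact fun i hi => hi
    -- any point of U lying in some A i has the same index set as Q
    have claim : ∀ x ∈ U, ∀ i : Fin k, x ∈ A i →
        (Finset.univ.filter (fun m => x ∈ A m)) = Finset.univ.filter (fun m => Q ∈ A m) := by
      intro x hxU i hxi
      have hsub : (Finset.univ.filter (fun m => x ∈ A m)) ⊆
          Finset.univ.filter (fun m => Q ∈ A m) := by
        intro m hm
        simp only [Finset.mem_filter, Finset.mem_univ, true_and] at hm ⊢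
        by_contra hQm
        have := hxU.2
        simp only [Set.mem_iInter, Set.mem_compl_iff] at this
        exact this m hQm hm
      have hcard : (Finset.univ.filter (fun m => Q ∈ A m)).card ≤
          (Finset.univ.filter (fun m => x ∈ A m)).card :=
        hmin x ⟨hxU.1, Set.mem_iUnion.mpr ⟨i, hxi⟩⟩
      exact Finset.eq_of_subset_of_card_le hsub hcard
    refine ⟨Q, hQ, U, hUopen.mem_nhds hQU, ?_⟩
    intro i j hi hj
    obtain ⟨x, hxU, hxi⟩ := hi
    obtain ⟨y, hyU, hyj⟩ := hj
    have hxI := claim x hxU i hxi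
    have hyI := claim y hyU j hyj
    have hQj : Q ∈ A j := by
      have : j ∈ Finset.univ.filter (fun m => Q ∈ A m) := by
        rw [← hyI]; simp [hyj]
      simpa using this
    have hQi : Q ∈ A i := by
      have : i ∈ Finset.univ.filter (fun m => Q ∈ A m) := by
        rw [← hxI]; simp [hxi]
      simpa using this
    apply Set.Subset.antisymm
    · rintro z ⟨hzU, hzi⟩
      refine ⟨hzU, ?_⟩
      have hzI := claim z hzU i hzi
      have : j ∈ Finset.univ.filter (fun m => z ∈ A m) := by
        rw [hzI]; simp [hQj]
      simpa using this
    · rintro z ⟨hzU, hzj⟩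
      refine ⟨hzU, ?_⟩
      have hzI := claim z hzU j hzj
      have : i ∈ Finset.univ.filter (fun m => z ∈ A m) := by
        rw [hzI]; simp [hQi]
      simpa using this
  -- monotonicity of the property under shrinking
  have mono : ∀ U V : Set X, V ⊆ U →
      (∀ i j : Fin k, (U ∩ A i).Nonempty → (U ∩ A j).Nonempty → U ∩ A i = U ∩ A j) →
      (∀ i j : Fin k, (V ∩ A i).Nonempty → (V ∩ A j).Nonempty → V ∩ A i = V ∩ A j) := by
    intro U V hVU hU i j hi hj
    have hUi : (U ∩ A i).Nonempty := hi.mono (Set.inter_subset_inter_left _ hVU)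
    have hUj : (U ∩ A j).Nonempty := hj.mono (Set.inter_subset_inter_left _ hVU)
    have h := hU i j hUi hUj
    have h1 : V ∩ A i = V ∩ (U ∩ A i) := by
      ext z; constructor
      · exact fun hz => ⟨hz.1, hVU hz.1, hz.2⟩
      · exact fun hz => ⟨hz.1, hz.2.2⟩
    have h2 : V ∩ A j = V ∩ (U ∩ A j) := by
      ext z; constructor
      · exact fun hz => ⟨hz.1, hVU hz.1, hz.2⟩
      · exact fun hz => ⟨hz.1, hz.2.2⟩
    rw [h1, h2, h]
  refine ⟨?_, ?_, ?_⟩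
  · -- nonemptiness
    obtain ⟨i, x, hx⟩ := hne
    have hVne : ((Set.univ : Set X) ∩ ⋃ i, A i).Nonempty :=
      ⟨x, Set.mem_univ x, Set.mem_iUnion.mpr ⟨i, hx⟩⟩
    obtain ⟨Q, hQ, hQS⟩ := key Set.univ isOpen_univ hVne
    obtain ⟨m, hm⟩ := Set.mem_iUnion.mp hQ.2
    exact ⟨Q, Set.mem_iUnion.mpr ⟨m, hm, hQS⟩⟩
  · -- openness
    refine ⟨⋃₀ {U | IsOpen U ∧ ∀ i j : Fin k,
        (U ∩ A i).Nonempty → (U ∩ A j).Nonempty → U ∩ A i = U ∩ A j},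
      isOpen_sUnion (fun U hU => hU.1), ?_⟩
    ext P
    constructor
    · rintro ⟨hPA, U, hUnhds, hUprop⟩
      refine ⟨⟨interior U, ⟨isOpen_interior,
        mono U (interior U) interior_subset hUprop⟩, mem_interior_iff_mem_nhds.mpr hUnhds⟩, hPA⟩
    · rintro ⟨⟨U, ⟨hUopen, hUprop⟩, hPU⟩, hPA⟩
      exact ⟨hPA, U, hUopen.mem_nhds hPU, hUprop⟩
  · -- density
    intro P hP
    rw [mem_closure_iff]
    intro V hV hPV
    obtain ⟨Q, hQ, hQS⟩ := key V hV ⟨P, hPV, hP⟩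
    exact ⟨Q, hQ.1, hQ.2, hQS⟩
end

section
/- Let K be a compact subset of a Euclidean space E (e.g., ℝⁿ). If K is not convex, then there exists a nondegenerate closed segment in E that intersects K exactly in its two endpoints. -/
theorem stmt_4 {n : ℕ} (K : Set (EuclideanSpace ℝ (Fin n)))
    (hK : IsCompact K) (hnc : ¬ Convex ℝ K) :
    ∃ p q : EuclideanSpace ℝ (Fin n), p ≠ q ∧
      segment ℝ p q ∩ K = {p, q} := by
  simp only [Convex, StarConvex] at hnc
  push_neg at hnc
  obtain ⟨a, ha, b, hb, α, β, hα, hβ, hαβ, hm⟩ := hnc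
  set f : ℝ → EuclideanSpace ℝ (Fin n) := fun t => (1 - t) • a + t • b with hf
  have hf0 : f 0 = a := by simp [hf]
  have hf1 : f 1 = b := by simp [hf]
  have hfβ : f β = α • a + β • b := by
    simp only [hf]
    congr 2
    linarith
  have hfβK : f β ∉ K := by rw [hfβ]; exact hm
  have hβ1 : β ≤ 1 := by linarith
  have hcont : Continuous f := by
    simp only [hf]; continuity
  have hKc : IsClosed K := hK.isClosed
  set Sl : Set ℝ := Set.Icc 0 β ∩ f ⁻¹' K with hSl
  have hSlc : IsClosed Sl := isClosed_Icc.inter (hKc.preimage hcont)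
  have h0Sl : (0:ℝ) ∈ Sl := ⟨⟨le_refl 0, hβ⟩, by simpa [hf0] using ha⟩
  have hSlbdd : BddAbove Sl := ⟨β, fun t ht => ht.1.2⟩
  set s := sSup Sl with hs
  have hsSl : s ∈ Sl := hSlc.csSup_mem ⟨0, h0Sl⟩ hSlbdd
  have hsle : ∀ t ∈ Sl, t ≤ s := fun t ht => le_csSup hSlbdd ht
  have hsβ : s < β := lt_of_le_of_ne hsSl.1.2 (fun h => hfβK (h ▸ hsSl.2))
  set Su : Set ℝ := Set.Icc β 1 ∩ f ⁻¹' K with hSu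
  have hSuc : IsClosed Su := isClosed_Icc.inter (hKc.preimage hcont)
  have h1Su : (1:ℝ) ∈ Su := ⟨⟨hβ1, le_refl 1⟩, by simpa [hf1] using hb⟩
  have hSubdd : BddBelow Su := ⟨β, fun t ht => ht.1.1⟩
  set u := sInf Su with hu
  have huSu : u ∈ Su := hSuc.csInf_mem ⟨1, h1Su⟩ hSubdd
  have hule : ∀ t ∈ Su, u ≤ t := fun t ht => csInf_le hSubdd ht
  have hβu : β < u := lt_of_le_of_ne huSu.1.1 (fun h => hfβK (h ▸ huSu.2))
  have hsu : s < u := lt_trans hsβ hβu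
  have hab : b ≠ a := by
    intro h
    apply hfβK
    have : f β = a := by
      simp only [hf, h, ← add_smul]
      norm_num
    rw [this]; exact ha
  have hfinj : Function.Injective f := by
    intro t t' h
    simp only [hf] at h
    have h2 : (t - t') • (b - a) = 0 := by
      have h3 : ((1 : ℝ) - t) • a + t • b - (((1:ℝ) - t') • a + t' • b)
          = (t - t') • (b - a) := by module
      rw [h] at h3
      rw [← h3]
      abel
    rcases smul_eq_zero.mp h2 with h4 | h4
    · linarith [sub_eq_zero.mp h4]
    · exact absurd (sub_eq_zero.mp h4) hab
  refine ⟨f s, f u, fun h => (ne_of_lt hsu) (hfinj h), ?_⟩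
  ext x
  simp only [Set.mem_inter_iff, Set.mem_insert_iff, Set.mem_singleton_iff]
  constructor
  · rintro ⟨hxseg, hxK⟩
    rw [segment_eq_image] at hxseg
    obtain ⟨θ, hθ, rfl⟩ := hxseg
    set t := (1 - θ) * s + θ * u with ht
    have hxt : (1 - θ) • f s + θ • f u = f t := by
      simp only [hf, ht]
      module
    obtain ⟨hθ0, hθ1⟩ := hθ
    have hst : s ≤ t := by nlinarith [hsu.le]
    have htu : t ≤ u := by nlinarith [hsu.le]
    beta_reduce at hxK ⊢
    rw [hxt] at hxK ⊢
    rcases le_total t β with h | h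
    · have htSl : t ∈ Sl := ⟨⟨le_trans hsSl.1.1 hst, h⟩, hxK⟩
      have : t = s := le_antisymm (hsle t htSl) hst
      left; rw [this]
    · have htSu : t ∈ Su := ⟨⟨h, le_trans htu huSu.1.2⟩, hxK⟩
      have : t = u := le_antisymm htu (hule t htSu)
      right; rw [this]
  · rintro (rfl | rfl)
    · exact ⟨left_mem_segment _ _ _, hsSl.2⟩
    · exact ⟨right_mem_segment _ _ _, huSu.2⟩
end

section
/- Let O be a nonempty bounded open connected subset of ℝ². Call a closed Euclidean disk B contained in the closure of O a 'good disk' if its boundary meets ∂O in at least 2 points; points of B ∩ ∂O for good disks B are 'good points'. Then the set of good points is dense in ∂O. -/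
open Metric Set Filter Topology Bornology
open scoped RealInnerProductSpace

section Aux

variable {E : Type*} [NormedAddCommGroup E] [InnerProductSpace ℝ E] [ProperSpace E]

/-- The sequence `F / (n + 2)` tends to zero. -/
private lemma aux_seq_tendsto (F : ℝ) :
    Tendsto (fun n : ℕ => F / ((n : ℝ) + 2)) atTop (𝓝 0) := by
  have h2 : Tendsto (fun n : ℕ => (n : ℝ) + 2) atTop atTop :=
    tendsto_atTop_add_const_right atTop 2 tendsto_natCast_atTop_atTop
  simpa using (tendsto_const_nhds (x := F)).div_atTop h2

/-- If a point of an open set is moved in direction `e`, the distance to the complement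
(a closed set `S`) grows at asymptotic rate at most `β`, then there is a point `w ∈ S`
realizing the `infDist` from `c` with `⟪c - w, e⟫ ≤ β * F`. -/
private lemma aux_contact (S : Set E) (hS : IsClosed S) (hne : S.Nonempty)
    (c : E) (F : ℝ) (hF : infDist c S = F) (hFpos : 0 < F)
    (e : E) (he : ‖e‖ = 1) (β : ℝ) (hβ : |β| ≤ 1)
    (hbound : ∀ n : ℕ, infDist (c + (F / ((n : ℝ) + 2)) • e) S ≤ F + β * (F / ((n : ℝ) + 2))) :
    ∃ w ∈ S, dist c w = F ∧ ⟪c - w, e⟫ ≤ β * F := by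
  set s : ℕ → ℝ := fun n => F / ((n : ℝ) + 2) with hs_def
  have hs_pos : ∀ n, 0 < s n := fun n => div_pos hFpos (by positivity)
  have hs_le : ∀ n, s n ≤ F / 2 := by
    intro n
    apply div_le_div_of_nonneg_left hFpos.le (by norm_num)
    have : (0 : ℝ) ≤ (n : ℝ) := Nat.cast_nonneg n
    linarith
  have hβ1 : β ≤ 1 := (abs_le.mp hβ).2
  have hβ2 : -1 ≤ β := (abs_le.mp hβ).1
  -- nearest points to the moved points
  have hw : ∀ n : ℕ, ∃ w ∈ S, infDist (c + s n • e) S = dist (c + s n • e) w :=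
    fun n => hS.exists_infDist_eq_dist hne _
  choose w hwS hwd using hw
  -- basic facts about each w n
  have hd1 : ∀ n, dist (c + s n • e) (w n) ≤ F + β * s n := fun n => (hwd n) ▸ hbound n
  have hd2 : ∀ n, F ≤ dist c (w n) := fun n => hF ▸ infDist_le_dist_of_mem (hwS n)
  have hq_dist : ∀ n, dist c (c + s n • e) = s n := by
    intro n
    rw [dist_comm, dist_eq_norm]
    simp only [add_sub_cancel_left, norm_smul, he, Real.norm_eq_abs,
      abs_of_pos (hs_pos n), mul_one]
  have hd3 : ∀ n, dist c (w n) ≤ F + 2 * s n := by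
    intro n
    have htri := dist_triangle c (c + s n • e) (w n)
    have hβs : β * s n ≤ s n := by nlinarith [hs_pos n]
    have := hd1 n
    rw [hq_dist n] at htri
    linarith
  have hd4 : ∀ n, ⟪c - w n, e⟫ ≤ β * F := by
    intro n
    have hexp : dist (c + s n • e) (w n) ^ 2
        = ‖c - w n‖ ^ 2 + 2 * (s n * ⟪c - w n, e⟫) + (s n) ^ 2 := by
      have h1 : c + s n • e - w n = (c - w n) + s n • e := by abel
      rw [dist_eq_norm, h1, norm_add_sq_real, real_inner_smul_right]
      have : ‖s n • e‖ ^ 2 = (s n) ^ 2 := by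
        rw [norm_smul, he, Real.norm_eq_abs, abs_of_pos (hs_pos n)]; ring
      rw [this]
    have hub : dist (c + s n • e) (w n) ^ 2 ≤ (F + β * s n) ^ 2 := by
      apply pow_le_pow_left₀ dist_nonneg (hd1 n)
    have hlb : F ^ 2 ≤ ‖c - w n‖ ^ 2 := by
      have : F ≤ ‖c - w n‖ := by rw [← dist_eq_norm]; exact hd2 n
      exact pow_le_pow_left₀ hFpos.le this 2
    have hβsq : β ^ 2 ≤ 1 := by nlinarith
    -- F^2 + 2 s ⟪⟫ + s^2 ≤ (F + β s)^2 = F^2 + 2βFs + β² s²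
    nlinarith [hs_pos n, hexp, hub, hlb]
  -- extract a convergent subsequence
  have hmem : ∀ n, w n ∈ closedBall c (2 * F) := by
    intro n
    rw [mem_closedBall, dist_comm]
    calc dist c (w n) ≤ F + 2 * s n := hd3 n
      _ ≤ F + 2 * (F / 2) := by linarith [hs_le n]
      _ = 2 * F := by ring
  obtain ⟨wl, hwl_mem, φ, hφ, hconv⟩ := (isCompact_closedBall c (2 * F)).tendsto_subseq hmem
  have hφatTop : Tendsto φ atTop atTop := hφ.tendsto_atTop
  have hsφ : Tendsto (fun n => s (φ n)) atTop (𝓝 0) := (aux_seq_tendsto F).comp hφatTop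
  refine ⟨wl, ?_, ?_, ?_⟩
  · exact hS.mem_of_tendsto hconv (Eventually.of_forall fun n => hwS (φ n))
  · -- dist c wl = F
    have hdconv : Tendsto (fun n => dist c (w (φ n))) atTop (𝓝 (dist c wl)) :=
      tendsto_const_nhds.dist hconv
    have hge : F ≤ dist c wl := ge_of_tendsto hdconv (Eventually.of_forall fun n => hd2 (φ n))
    have hub_tendsto : Tendsto (fun n => F + 2 * s (φ n)) atTop (𝓝 F) := by
      have := tendsto_const_nhds (x := F) (f := atTop (α := ℕ)) |>.add (hsφ.const_mul 2)
      simpa using this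
    have hle : dist c wl ≤ F :=
      le_of_tendsto_of_tendsto' hdconv hub_tendsto fun n => hd3 (φ n)
    linarith
  · -- inner product bound
    have hiconv : Tendsto (fun n => ⟪c - w (φ n), e⟫) atTop (𝓝 ⟪c - wl, e⟫) :=
      (tendsto_const_nhds.sub hconv).inner tendsto_const_nhds
    exact le_of_tendsto hiconv (Eventually.of_forall fun n => hd4 (φ n))

/-- A nearest point of the (closed) complement of an open set is in the frontier. -/
private lemma aux_mem_frontier {O : Set E} (hO : IsOpen O) {c w : E} (hc : c ∈ O)
    (hw : w ∈ Oᶜ) (hd : dist c w = infDist c Oᶜ) : w ∈ frontier O := by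
  have hball : ball c (infDist c Oᶜ) ⊆ O := by
    intro p hp
    by_contra hpO
    have h1 : infDist c Oᶜ ≤ dist c p := infDist_le_dist_of_mem hpO
    rw [mem_ball, dist_comm] at hp
    linarith
  have hFpos : 0 < dist c w := by
    rw [dist_pos]
    rintro rfl
    exact hw hc
  rw [hO.frontier_eq]
  refine ⟨?_, hw⟩
  rw [Metric.mem_closure_iff]
  intro ε hε
  set F := dist c w with hF
  set t : ℝ := min 1 (ε / (2 * F)) with ht_def
  have ht0 : 0 < t := lt_min one_pos (by positivity)
  have ht1 : t ≤ 1 := min_le_left _ _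
  refine ⟨w + t • (c - w), ?_, ?_⟩
  · -- in the ball around c
    apply hball
    rw [mem_ball, dist_eq_norm]
    have h1 : w + t • (c - w) - c = (1 - t) • (w - c) := by module
    rw [h1, norm_smul, Real.norm_eq_abs, abs_of_nonneg (by linarith)]
    have h2 : ‖w - c‖ = F := by rw [← dist_eq_norm, dist_comm]
    rw [h2, ← hd]
    nlinarith [hFpos, ht0]
  · -- close to w
    rw [dist_comm, dist_eq_norm]
    have h1 : w + t • (c - w) - w = t • (c - w) := by abel
    rw [h1, norm_smul, Real.norm_eq_abs, abs_of_pos ht0, ← dist_eq_norm]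
    have h2 : t ≤ ε / (2 * F) := min_le_right _ _
    calc t * dist c w ≤ (ε / (2 * F)) * F := by
          apply mul_le_mul h2 le_rfl hFpos.le (by positivity)
      _ = ε / 2 := by field_simp
      _ < ε := by linarith

end Aux

set_option maxHeartbeats 1000000

theorem stmt_8 (O : Set (EuclideanSpace ℝ (Fin 2)))
    (hne : O.Nonempty) (hbdd : Bornology.IsBounded O)
    (hO : IsOpen O) (hc : IsConnected O) :
    frontier O ⊆ closure {y | ∃ (x : EuclideanSpace ℝ (Fin 2)) (r : ℝ), x ∈ O ∧
      Metric.closedBall x r ⊆ closure O ∧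
      (Metric.closedBall x r ∩ frontier O).Nontrivial ∧
      y ∈ Metric.closedBall x r ∩ frontier O} := by
  intro z hz
  rw [Metric.mem_closure_iff]
  intro ε hε
  have hzO : z ∉ O := by
    rw [hO.frontier_eq] at hz
    exact hz.2
  have hScl : IsClosed Oᶜ := hO.isClosed_compl
  have hSne : Oᶜ.Nonempty := ⟨z, hzO⟩
  have hzcl : z ∈ closure O := frontier_subset_closure hz
  -- pick x ∈ O near z
  obtain ⟨x, hxO, hxz⟩ : ∃ x ∈ O, dist z x < ε / 4 :=
    Metric.mem_closure_iff.mp hzcl (ε / 4) (by positivity)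
  set d := infDist x Oᶜ with hd_def
  have hdlt : d < ε / 4 := by
    calc d ≤ dist x z := infDist_le_dist_of_mem hzO
      _ < ε / 4 := by rwa [dist_comm] at hxz
  have hdpos : 0 < d :=
    (hScl.notMem_iff_infDist_pos hSne).mp (by simp [hxO])
  -- nearest boundary point y to x
  obtain ⟨y, hyS, hyd⟩ := hScl.exists_infDist_eq_dist hSne x
  have hyF : y ∈ frontier O := aux_mem_frontier hO hxO hyS hyd.symm
  have hxy : dist x y = d := hyd.symm
  have hyz : dist y z < ε / 2 := by
    calc dist y z ≤ dist y x + dist x z := dist_triangle _ _ _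
      _ < ε / 4 + ε / 4 := by
          apply add_lt_add
          · rw [dist_comm]; rw [hxy] at *; exact hdlt
          · rwa [dist_comm] at hxz
      _ = ε / 2 := by ring
  -- parameters
  set Δ := Metric.diam (closure O) with hΔ_def
  have hΔ0 : 0 ≤ Δ := Metric.diam_nonneg
  set δ := min (1 / 2 : ℝ) (ε ^ 2 / (12 * (Δ + 1) ^ 2)) with hδ_def
  have hδpos : 0 < δ := lt_min (by norm_num) (by positivity)
  have hδhalf : δ ≤ 1 / 2 := min_le_left _ _
  have hδeps : δ ≤ ε ^ 2 / (12 * (Δ + 1) ^ 2) := min_le_right _ _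
  set lam := 1 - δ with hlam_def
  have hlam0 : 0 < lam := by rw [hlam_def]; linarith
  have hlam1 : lam < 1 := by rw [hlam_def]; linarith
  -- maximize Φ over closure O
  have hKb : IsBounded (closure O) := hbdd.closure
  obtain ⟨R, hR⟩ := hKb.subset_closedBall x
  have hKcpt : IsCompact (closure O) :=
    (isCompact_closedBall x R).of_isClosed_subset isClosed_closure hR
  have hcont : ContinuousOn (fun p => infDist p Oᶜ - lam * dist p y) (closure O) := by
    apply Continuous.continuousOn
    exact (continuous_infDist_pt _).sub (continuous_const.mul (continuous_id.dist continuous_const))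
  obtain ⟨c, hcK, hcmax'⟩ := hKcpt.exists_isMaxOn ⟨x, subset_closure hxO⟩ hcont
  have hcmax : ∀ q ∈ closure O,
      infDist q Oᶜ - lam * dist q y ≤ infDist c Oᶜ - lam * dist c y :=
    fun q hq => hcmax' hq
  set f := infDist c Oᶜ with hf_def
  set D := dist c y with hD_def
  have hbase : δ * d ≤ f - lam * D := by
    have h1 := hcmax x (subset_closure hxO)
    rw [hxy] at h1
    have : d - lam * d = δ * d := by rw [hlam_def]; ring
    linarith
  have hfD : f ≤ D := infDist_le_dist_of_mem hyS
  have hfpos : 0 < f := by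
    rcases le_or_gt f 0 with h | h
    · exfalso
      have hD0 : 0 ≤ D := dist_nonneg
      nlinarith [mul_nonneg hlam0.le hD0, mul_pos hδpos hdpos]
    · exact h
  have hDpos : 0 < D := lt_of_lt_of_le hfpos hfD
  have hcO : c ∈ O := by
    by_contra h
    have : f = 0 := infDist_zero_of_mem h
    linarith
  have hball : ball c f ⊆ O := by
    intro p hp
    by_contra hpO
    have h1 : f ≤ dist c p := infDist_le_dist_of_mem hpO
    rw [mem_ball, dist_comm] at hp
    linarith
  have hcb_sub : closedBall c f ⊆ closure O := by
    rw [← closure_ball c (ne_of_gt hfpos)]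
    exact closure_mono hball
  have hflamD : lam * D ≤ f := by nlinarith [mul_pos hδpos hdpos]
  -- nearest point w₀ to c
  obtain ⟨w₀, hw₀S, hw₀d⟩ := hScl.exists_infDist_eq_dist hSne c
  have hw₀F : w₀ ∈ frontier O := aux_mem_frontier hO hcO hw₀S hw₀d.symm
  have hw₀dist : dist c w₀ = f := hw₀d.symm
  -- a useful fact: moved points stay in closure O and satisfy the max inequality
  have hmove : ∀ (e : EuclideanSpace ℝ (Fin 2)), ‖e‖ = 1 → ∀ n : ℕ,
      infDist (c + (f / ((n : ℝ) + 2)) • e) Oᶜ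
        ≤ f + lam * (dist (c + (f / ((n : ℝ) + 2)) • e) y - D) := by
    intro e he n
    set s := f / ((n : ℝ) + 2) with hs_def
    have hs0 : 0 < s := div_pos hfpos (by positivity)
    have hsf : s < f := by
      rw [hs_def, div_lt_iff₀ (by positivity : (0:ℝ) < (n : ℝ) + 2)]
      have : (0 : ℝ) ≤ (n : ℝ) := Nat.cast_nonneg n
      nlinarith
    have hq : c + s • e ∈ ball c f := by
      rw [mem_ball, dist_eq_norm]
      simp only [add_sub_cancel_left, norm_smul, he, Real.norm_eq_abs,
        abs_of_pos hs0, mul_one]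
      exact hsf
    have hqcl : c + s • e ∈ closure O := subset_closure (hball hq)
    have := hcmax _ hqcl
    linarith
  -- STEP 1: the contact set is nontrivial
  have hnt : (closedBall c f ∩ frontier O).Nontrivial := by
    by_contra hns
    have hsub : (closedBall c f ∩ frontier O).Subsingleton := not_nontrivial_iff.mp hns
    set u := f⁻¹ • (c - w₀) with hu_def
    have hcw₀ : ‖c - w₀‖ = f := by rw [← dist_eq_norm]; exact hw₀dist
    have hu : ‖u‖ = 1 := by
      rw [hu_def, norm_smul, hcw₀, Real.norm_eq_abs, abs_of_pos (inv_pos.mpr hfpos)]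
      field_simp
    have hbound : ∀ n : ℕ, infDist (c + (f / ((n : ℝ) + 2)) • u) Oᶜ
        ≤ f + lam * (f / ((n : ℝ) + 2)) := by
      intro n
      have h1 := hmove u hu n
      set s := f / ((n : ℝ) + 2) with hs_def
      have hs0 : 0 < s := div_pos hfpos (by positivity)
      have hdy : dist (c + s • u) y ≤ D + s := by
        calc dist (c + s • u) y ≤ dist (c + s • u) c + dist c y := dist_triangle _ _ _
          _ = s + D := by
              rw [dist_eq_norm]
              simp only [add_sub_cancel_left, norm_smul, hu, Real.norm_eq_abs,
                abs_of_pos hs0, mul_one]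
              rfl
          _ = D + s := by ring
      have h2 : lam * (dist (c + s • u) y - D) ≤ lam * s :=
        mul_le_mul_of_nonneg_left (by linarith) hlam0.le
      linarith
    obtain ⟨w, hwS, hwd, hwi⟩ := aux_contact Oᶜ hScl hSne c f rfl hfpos u hu lam
      (abs_le.mpr ⟨by linarith, by linarith⟩) hbound
    have hwF : w ∈ frontier O := aux_mem_frontier hO hcO hwS (by rw [hwd])
    have hww₀ : w = w₀ := by
      apply hsub
      · exact ⟨by rw [mem_closedBall, dist_comm]; exact hwd.le, hwF⟩
      · exact ⟨by rw [mem_closedBall, dist_comm]; exact hw₀dist.le, hw₀F⟩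
    rw [hww₀] at hwi
    have hinner : ⟪c - w₀, u⟫ = f := by
      rw [hu_def, real_inner_smul_right, real_inner_self_eq_norm_mul_norm, hcw₀]
      field_simp
    rw [hinner] at hwi
    nlinarith [hfpos, hδpos]
  -- STEP 2: locate a contact point near y
  set v := D⁻¹ • (y - c) with hv_def
  have hyc : ‖y - c‖ = D := by rw [← dist_eq_norm, dist_comm]
  have hv : ‖v‖ = 1 := by
    rw [hv_def, norm_smul, hyc, Real.norm_eq_abs, abs_of_pos (inv_pos.mpr hDpos)]
    field_simp
  have hDv : D • v = y - c := by
    rw [hv_def, smul_smul, mul_inv_cancel₀ (ne_of_gt hDpos), one_smul]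
  have hbound2 : ∀ n : ℕ, infDist (c + (f / ((n : ℝ) + 2)) • v) Oᶜ
      ≤ f + (-lam) * (f / ((n : ℝ) + 2)) := by
    intro n
    have h1 := hmove v hv n
    set s := f / ((n : ℝ) + 2) with hs_def
    have hs0 : 0 < s := div_pos hfpos (by positivity)
    have hsf : s < f := by
      rw [hs_def, div_lt_iff₀ (by positivity : (0:ℝ) < (n : ℝ) + 2)]
      have : (0 : ℝ) ≤ (n : ℝ) := Nat.cast_nonneg n
      nlinarith
    have hdy : dist (c + s • v) y = D - s := by
      rw [dist_eq_norm]
      have h2 : c + s • v - y = -((D - s) • v) := by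
        rw [sub_smul, hDv]
        abel
      rw [h2, norm_neg, norm_smul, hv, Real.norm_eq_abs, mul_one,
        abs_of_nonneg (by linarith [hfD] : (0:ℝ) ≤ D - s)]
    rw [hdy] at h1
    linarith
  obtain ⟨wt, hwtS, hwtd, hwti⟩ := aux_contact Oᶜ hScl hSne c f rfl hfpos v hv (-lam)
    (abs_le.mpr ⟨by linarith, by linarith⟩) hbound2
  have hwtF : wt ∈ frontier O := aux_mem_frontier hO hcO hwtS (by rw [hwtd])
  -- distance estimate : dist wt y ^ 2 ≤ 3 δ D^2
  have hDle : D ≤ Δ := by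
    apply Metric.dist_le_diam_of_mem hKb hcK (frontier_subset_closure hyF)
  have hkey : dist wt y ^ 2 ≤ 3 * δ * D ^ 2 := by
    have hexp : dist wt y ^ 2 = ‖wt - c‖ ^ 2 + 2 * ⟪wt - c, c - y⟫ + ‖c - y‖ ^ 2 := by
      rw [dist_eq_norm]
      have h1 : wt - y = (wt - c) + (c - y) := by abel
      rw [h1, norm_add_sq_real]
    have h1 : ‖wt - c‖ = f := by rw [← dist_eq_norm, dist_comm]; exact hwtd
    have h2 : ‖c - y‖ = D := by rw [← dist_eq_norm]
    have h3 : ⟪wt - c, c - y⟫ ≤ D * (-lam * f) := by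
      have hcy : c - y = -(D • v) := by rw [hDv]; abel
      have : ⟪wt - c, c - y⟫ = D * ⟪c - wt, v⟫ := by
        rw [hcy, inner_neg_right, real_inner_smul_right]
        have : wt - c = -(c - wt) := by abel
        rw [this, inner_neg_left]
        ring
      rw [this]
      have := hwti
      nlinarith [hDpos]
    rw [hexp, h1, h2]
    -- f² + D² - 2 lam D f ≤ 3 δ D², using lam D ≤ f ≤ D, lam = 1 - δ, δ ≤ 1
    have hδ1 : δ ≤ 1 := by linarith
    nlinarith [hflamD, hfD, hDpos, hfpos, hδpos]
  have hwty : dist wt y < ε / 2 := by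
    have h1 : dist wt y ^ 2 < (ε / 2) ^ 2 := by
      have h2 : 3 * δ * D ^ 2 ≤ 3 * δ * Δ ^ 2 :=
        mul_le_mul_of_nonneg_left (pow_le_pow_left₀ hDpos.le hDle 2)
          (by positivity : (0:ℝ) ≤ 3 * δ)
      have h3 : 3 * δ * Δ ^ 2 < (ε / 2) ^ 2 := by
        have h4 : 3 * (ε ^ 2 / (12 * (Δ + 1) ^ 2)) * Δ ^ 2 < (ε / 2) ^ 2 := by
          have hεsq : (0:ℝ) < ε ^ 2 := by positivity
          have heq : 3 * (ε ^ 2 / (12 * (Δ + 1) ^ 2)) * Δ ^ 2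
              = (ε ^ 2 * Δ ^ 2) / (4 * (Δ + 1) ^ 2) := by
            field_simp
            ring
          rw [heq, div_lt_iff₀ (by positivity : (0:ℝ) < 4 * (Δ + 1) ^ 2)]
          nlinarith [hΔ0, hεsq]
        calc 3 * δ * Δ ^ 2 ≤ 3 * (ε ^ 2 / (12 * (Δ + 1) ^ 2)) * Δ ^ 2 := by
              nlinarith [sq_nonneg Δ]
          _ < (ε / 2) ^ 2 := h4
      linarith
    exact lt_of_pow_lt_pow_left₀ 2 (by positivity) h1
  -- conclusion
  refine ⟨wt, ⟨c, f, hcO, hcb_sub, hnt, ?_, hwtF⟩, ?_⟩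
  · rw [mem_closedBall, dist_comm]
    exact hwtd.le
  · calc dist z wt ≤ dist z y + dist y wt := dist_triangle _ _ _
      _ < ε / 2 + ε / 2 := by
          apply add_lt_add
          · rwa [dist_comm]
          · rwa [dist_comm]
      _ = ε := by ring
end

section
/- Let f : S¹ → ℝ² be a continuous locally injective map (a locally-simple curve). Then the image f(S¹) has empty interior in ℝ². -/
open Set Metric Complex Real

lemma no_inj_ball (g : ℂ → ℝ) (w : ℂ) (r : ℝ) (hr : 0 < r)
    (hc : ContinuousOn g (Metric.ball w r)) (hi : Set.InjOn g (Metric.ball w r)) : False := by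
  set ρ : ℝ := r / 2 with hρdef
  have hρ0 : 0 < ρ := by positivity
  set γ : ℝ → ℂ := fun θ => w + (ρ : ℂ) * Complex.exp (θ * Complex.I) with hγdef
  have hγc : Continuous γ := by fun_prop
  have hmem : ∀ θ : ℝ, γ θ ∈ Metric.ball w r := by
    intro θ
    have h1 : ‖(ρ : ℂ) * Complex.exp (θ * Complex.I)‖ = ρ := by
      rw [norm_mul, Complex.norm_exp_ofReal_mul_I]
      simp [abs_of_pos hρ0]
    simp only [γ, Metric.mem_ball, Complex.dist_eq]
    have h2 : w + (ρ : ℂ) * Complex.exp (θ * Complex.I) - w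
        = (ρ : ℂ) * Complex.exp (θ * Complex.I) := by ring
    rw [h2, h1]; linarith
  set Ap : Set ℂ := γ '' Set.Icc 0 π with hApdef
  set Am : Set ℂ := γ '' Set.Icc π (2 * π) with hAmdef
  have hApB : Ap ⊆ Metric.ball w r := by rintro _ ⟨θ, -, rfl⟩; exact hmem θ
  have hAmB : Am ⊆ Metric.ball w r := by rintro _ ⟨θ, -, rfl⟩; exact hmem θ
  have hu0 : γ 0 = w + ρ := by simp [γ]
  have hvπ : γ π = w - ρ := by
    simp only [γ, Complex.ofReal_mul]
    rw [Complex.exp_pi_mul_I]; ring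
  have huv : γ 0 ≠ γ π := by
    rw [hu0, hvπ]
    intro h
    have : (ρ : ℂ) = 0 := by linear_combination h / 2
    exact_mod_cast hρ0.ne' (by exact_mod_cast this)
  -- intersection of the two arcs
  have hinter : ∀ p, p ∈ Ap → p ∈ Am → p = γ 0 ∨ p = γ π := by
    rintro p ⟨θ, hθ, rfl⟩ ⟨θ', hθ', he⟩
    have hexp : Complex.exp (θ' * Complex.I) = Complex.exp (θ * Complex.I) := by
      have hρne : (ρ : ℂ) ≠ 0 := by exact_mod_cast hρ0.ne'
      simp only [γ, add_right_inj] at he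
      replace he : Complex.exp (θ' * Complex.I) = Complex.exp (θ * Complex.I) ∨ ρ = 0 := Or.inl (mul_left_cancel₀ hρne he)
      rcases he with he | he
      · exact he
      · exact absurd he hρ0.ne'
    rw [Complex.exp_eq_exp_iff_exists_int] at hexp
    obtain ⟨n, hn⟩ := hexp
    have him : (θ' : ℝ) = θ + n * (2 * π) := by
      have := congrArg Complex.im hn
      simpa using this
    have hπ := Real.pi_pos
    have hn01 : n = 0 ∨ n = 1 := by
      have h1 : (0 : ℝ) ≤ (n : ℝ) * (2 * π) := by
        have := hθ.2; have := hθ'.1; linarith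
      have h2 : (n : ℝ) * (2 * π) ≤ 2 * π := by
        have := hθ.1; have := hθ'.2; linarith
      have h3 : (0 : ℝ) ≤ (n : ℝ) := by nlinarith
      have h4 : (n : ℝ) ≤ 1 := by nlinarith
      have h3' : (0 : ℤ) ≤ n := by exact_mod_cast h3
      have h4' : n ≤ (1 : ℤ) := by exact_mod_cast h4
      omega
    rcases hn01 with rfl | rfl
    · -- θ' = θ, both must be π
      have : θ' = θ := by simpa using him
      subst this
      have : θ' = π := le_antisymm hθ.2 hθ'.1
      subst this
      right; rfl
    · -- θ' = θ + 2π, so θ = 0, θ' = 2π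
      have hθ0 : θ = 0 := by
        have := hθ'.2; have := hθ.1
        simp only [Int.cast_one, one_mul] at him
        linarith
      subst hθ0
      left; rfl
  -- both arcs are connected
  have hIp : IsPreconnected Ap := (isPreconnected_Icc).image γ hγc.continuousOn
  have hIm : IsPreconnected Am := (isPreconnected_Icc).image γ hγc.continuousOn
  have hgp : IsPreconnected (g '' Ap) := hIp.image g (hc.mono hApB)
  have hgm : IsPreconnected (g '' Am) := hIm.image g (hc.mono hAmB)
  have huAp : γ 0 ∈ Ap := ⟨0, ⟨le_refl 0, Real.pi_pos.le⟩, rfl⟩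
  have hvAp : γ π ∈ Ap := ⟨π, ⟨Real.pi_pos.le, le_refl π⟩, rfl⟩
  have hvAm : γ π ∈ Am := ⟨π, ⟨le_refl π, by linarith [Real.pi_pos]⟩, rfl⟩
  have h2π : γ (2 * π) = γ 0 := by
    simp only [γ]
    rw [show ((2 * π : ℝ) : ℂ) * Complex.I = 2 * (π : ℂ) * Complex.I by push_cast; ring,
      Complex.exp_two_pi_mul_I]
    norm_num [Complex.exp_zero]
  have huAm : γ 0 ∈ Am := ⟨2 * π, ⟨by linarith [Real.pi_pos], le_refl _⟩, h2π⟩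
  have hguv : g (γ 0) ≠ g (γ π) := fun h => huv (hi (hmem 0) (hmem π) h)
  have hmIcc : (g (γ 0) + g (γ π)) / 2 ∈ Set.Icc (min (g (γ 0)) (g (γ π))) (max (g (γ 0)) (g (γ π))) := by
    constructor
    · rcases le_total (g (γ 0)) (g (γ π)) with h | h <;> simp [min_def, max_def, h] <;> linarith
    · rcases le_total (g (γ 0)) (g (γ π)) with h | h <;> simp [min_def, max_def, h] <;> linarith
  have hsub : ∀ s : Set ℝ, IsPreconnected s → g (γ 0) ∈ s → g (γ π) ∈ s → (g (γ 0) + g (γ π)) / 2 ∈ s := by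
    intro s hs h0 hπ'
    rcases le_total (g (γ 0)) (g (γ π)) with h | h
    · exact hs.Icc_subset h0 hπ' (by simpa [min_eq_left h, max_eq_right h] using hmIcc)
    · exact hs.Icc_subset hπ' h0 (by simpa [min_eq_right h, max_eq_left h] using hmIcc)
  obtain ⟨p1, hp1, hgp1⟩ := hsub _ hgp ⟨_, huAp, rfl⟩ ⟨_, hvAp, rfl⟩
  obtain ⟨p2, hp2, hgp2⟩ := hsub _ hgm ⟨_, huAm, rfl⟩ ⟨_, hvAm, rfl⟩
  have hp12 : p1 = p2 := hi (hApB hp1) (hAmB hp2) (hgp1.trans hgp2.symm)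
  subst hp12
  rcases hinter p1 hp1 hp2 with rfl | rfl
  · exact hguv (by linarith)
  · exact hguv (by linarith)

lemma mem_slitPlane_of_abs_one {z : ℂ} (h1 : ‖z‖ = 1) (h2 : z ≠ -1) :
    z ∈ Complex.slitPlane := by
  rw [Complex.mem_slitPlane_iff]
  by_contra hcon
  push_neg at hcon
  obtain ⟨hre, him⟩ := hcon
  have hz : z = (z.re : ℂ) := by
    apply Complex.ext <;> simp [him]
  rw [hz, Complex.norm_real, Real.norm_eq_abs] at h1
  have : z.re = -1 := by cases abs_cases z.re <;> linarith
  exact h2 (by rw [hz, this]; norm_num)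

theorem stmt_10 (f : Circle → ℂ) (hf : Continuous f)
    (hloc : ∀ x : Circle, ∃ U ∈ nhds x, Set.InjOn f U) :
    interior (Set.range f) = ∅ := by
  classical
  by_contra hne
  obtain ⟨z₀, hz₀⟩ := Set.nonempty_iff_ne_empty.2 hne
  obtain ⟨ε, hε, hball⟩ := Metric.isOpen_iff.1 isOpen_interior z₀ hz₀
  set δ : ℝ := ε / 2 with hδdef
  have hδ0 : 0 < δ := by positivity
  have hball' : Metric.closedBall z₀ δ ⊆ Set.range f := by
    intro y hy
    exact interior_subset (hball (lt_of_le_of_lt (Metric.mem_closedBall.1 hy) (by simp [hδdef]; linarith)))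
  -- compact injectivity neighborhoods avoiding an antipodal-type point
  have hK : ∀ x : Circle, ∃ K : Set Circle, IsCompact K ∧ x ∈ interior K ∧
      Set.InjOn f K ∧ ∀ y ∈ K, (y : ℂ) ≠ -(x : ℂ) := by
    intro x
    obtain ⟨U, hU, hUinj⟩ := hloc x
    have hcoe : Continuous (fun z : Circle => (z : ℂ)) := continuous_induced_dom
    have hopen : IsOpen (interior U ∩ {y : Circle | (y : ℂ) ≠ -(x : ℂ)}) :=
      isOpen_interior.inter (isOpen_compl_singleton.preimage hcoe)
    have hxmem : x ∈ interior U ∩ {y : Circle | (y : ℂ) ≠ -(x : ℂ)} := by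
      refine ⟨mem_interior_iff_mem_nhds.2 hU, ?_⟩
      intro h
      have hx0 : (x : ℂ) = 0 := by linear_combination h / 2
      exact x.coe_ne_zero hx0
    obtain ⟨K, hKc, hKx, hKsub⟩ := exists_compact_subset hopen hxmem
    exact ⟨K, hKc, hKx, hUinj.mono (fun y hy => interior_subset (hKsub hy).1),
      fun y hy => (hKsub hy).2⟩
  choose K hKc hKx hKinj hKne using hK
  -- finite subcover
  obtain ⟨t, ht⟩ := isCompact_univ.elim_finite_subcover (fun x => interior (K x))
    (fun _ => isOpen_interior) (fun y _ => Set.mem_iUnion.2 ⟨y, hKx y⟩)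
  have hcover : Set.range f ⊆ ⋃ i ∈ t, f '' K i := by
    rintro _ ⟨y, rfl⟩
    have := ht (Set.mem_univ y)
    simp only [Set.mem_iUnion] at this ⊢
    obtain ⟨i, hit, hy⟩ := this
    exact ⟨i, hit, y, interior_subset hy, rfl⟩
  -- Baire category in the closed ball
  haveI : Nonempty (Metric.closedBall z₀ δ) := ⟨⟨z₀, Metric.mem_closedBall_self hδ0.le⟩⟩
  haveI : CompleteSpace (Metric.closedBall z₀ δ) :=
    (Metric.isClosed_closedBall (x := z₀) (ε := δ)).completeSpace_coe
  set S : t → Set (Metric.closedBall z₀ δ) :=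
    fun i => (Subtype.val : _ → ℂ) ⁻¹' (f '' K i) with hSdef
  have hSclosed : ∀ i, IsClosed (S i) :=
    fun i => (((hKc i).image hf).isClosed).preimage continuous_subtype_val
  have hSunion : ⋃ i, S i = Set.univ := by
    ext p
    simp only [Set.mem_iUnion, Set.mem_univ, iff_true]
    have hp := hcover (hball' p.2)
    simp only [Set.mem_iUnion] at hp
    obtain ⟨i, hit, hpi⟩ := hp
    exact ⟨⟨i, hit⟩, hpi⟩
  obtain ⟨i, y, hy⟩ := nonempty_interior_of_iUnion_of_closed hSclosed hSunion
  -- extract a ball in ℂ contained in f '' K x₀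
  set x₀ : Circle := (i : Circle) with hx₀def
  have hSnhds : S i ∈ nhds y := mem_interior_iff_mem_nhds.1 hy
  rw [mem_nhds_subtype] at hSnhds
  obtain ⟨W, hW, hWsub⟩ := hSnhds
  obtain ⟨W', hW'sub, hW'open, hyW'⟩ := _root_.mem_nhds_iff.1 hW
  have hclos : (y : ℂ) ∈ closure (Metric.ball z₀ δ) := by
    rw [closure_ball z₀ hδ0.ne']; exact y.2
  obtain ⟨v, hvW', hvball⟩ := (_root_.mem_closure_iff.1 hclos) W' hW'open hyW'
  have hVsub : W' ∩ Metric.ball z₀ δ ⊆ f '' K x₀ := by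
    intro u hu
    have hu' : u ∈ Metric.closedBall z₀ δ := Metric.ball_subset_closedBall hu.2
    exact hWsub (show (⟨u, hu'⟩ : Metric.closedBall z₀ δ) ∈ _ from hW'sub hu.1)
  obtain ⟨r, hr0, hrball⟩ := Metric.isOpen_iff.1 (hW'open.inter Metric.isOpen_ball) v ⟨hvW', hvball⟩
  have hrsub : Metric.ball v r ⊆ f '' K x₀ := fun u hu => hVsub (hrball hu)
  -- build the inverse-composed-with-angle map
  haveI hXcomp : CompactSpace (K x₀) := isCompact_iff_compactSpace.1 (hKc x₀)
  set F : (K x₀) → ℂ := fun q => f q with hFdef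
  have hFcont : Continuous F := hf.comp continuous_subtype_val
  have hFinj : Function.Injective F := fun a b hab => Subtype.ext ((hKinj x₀) a.2 b.2 hab)
  have hrangeF : Set.range F = f '' K x₀ := (Set.image_eq_range f (K x₀)).symm
  set e : (K x₀) ≃ₜ Set.range F :=
    (hFcont.isClosedEmbedding hFinj).toIsEmbedding.toHomeomorph with hedef
  have heF : ∀ q : (K x₀), (e q : ℂ) = F q := fun q => rfl
  set ψ : (K x₀) → ℝ := fun q => Complex.arg (((q : Circle) : ℂ) / ((x₀ : Circle) : ℂ)) with hψdef
  have hslit : ∀ q : (K x₀), ((q : Circle) : ℂ) / ((x₀ : Circle) : ℂ) ∈ Complex.slitPlane := by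
    intro q
    apply mem_slitPlane_of_abs_one
    · rw [norm_div, Circle.norm_coe, Circle.norm_coe]; norm_num
    · intro h
      rw [div_eq_iff (Circle.coe_ne_zero x₀)] at h
      exact hKne x₀ q q.2 (by rw [h]; ring)
  have hinner : Continuous (fun q : (K x₀) => ((q : Circle) : ℂ) / ((x₀ : Circle) : ℂ)) :=
    (continuous_induced_dom.comp continuous_subtype_val).div_const _
  have hψcont : Continuous ψ := by
    rw [continuous_iff_continuousAt]
    intro q
    exact ContinuousAt.comp (g := Complex.arg)
      (f := fun q : (K x₀) => ((q : Circle) : ℂ) / ((x₀ : Circle) : ℂ))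
      (Complex.continuousAt_arg (hslit q)) hinner.continuousAt
  have hψinj : Function.Injective ψ := by
    intro a b hab
    have habs : ‖((a : Circle) : ℂ) / ((x₀ : Circle) : ℂ)‖
        = ‖((b : Circle) : ℂ) / ((x₀ : Circle) : ℂ)‖ := by
      simp [map_div₀, Circle.norm_coe]
    have := Complex.ext_norm_arg habs hab
    rw [div_eq_div_iff (Circle.coe_ne_zero x₀) (Circle.coe_ne_zero x₀)] at this
    have hcc : ((a : Circle) : ℂ) = ((b : Circle) : ℂ) :=
      mul_right_cancel₀ (Circle.coe_ne_zero x₀) this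
    exact Subtype.ext (Circle.coe_injective hcc)
  set g : ℂ → ℝ := fun u => if h : u ∈ Set.range F then ψ (e.symm ⟨u, h⟩) else 0 with hgdef
  have hgrestr : (Set.range F).restrict g = ψ ∘ e.symm := by
    funext u
    simp only [Set.restrict, Set.domRestrict, g, dif_pos u.2, Function.comp_apply, Subtype.coe_eta]
  have hgcont : ContinuousOn g (Set.range F) := by
    rw [continuousOn_iff_continuous_restrict]; change Continuous ((Set.range F).restrict g); rw [hgrestr]
    exact hψcont.comp e.symm.continuous
  have hginj : Set.InjOn g (Set.range F) := by
    intro u1 h1 u2 h2 heq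
    simp only [g, dif_pos h1, dif_pos h2] at heq
    have := e.symm.injective (hψinj heq)
    exact congrArg Subtype.val this
  have hballF : Metric.ball v r ⊆ Set.range F := by rw [hrangeF]; exact hrsub
  exact no_inj_ball g v r hr0 (hgcont.mono hballF) (hginj.mono hballF)
end
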